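/- Let f : [0,1) → [0,1) be a piecewise increasing contraction with singular set S, such that f has no left periodic singular point (i.e., there is no x ∈ S ∪ {1} and n ≥ 1 with lim_{y→x⁻} fⁿ(y) = x). If Q = ⋃_{n≥0} f^{-n}(S) is finite, then f is asymptotically periodic: for every x ∈ [0,1), ω(f,x) is a periodic orbit, and f has only finitely many periodic orbits. -/

import Mathlib

/-- The ω-limit set of `x` under iteration of `f`: the cluster points of the orbit. -/
def omegaSet (f : ℝ → ℝ) (x : ℝ) : Set ℝ :=
  {y | MapClusterPt y Filter.atTop fun n => f^[n] x}


open Set Filter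

namespace Stmt8

/-- The set `Q = ⋃ₙ f⁻ⁿ(S)` (within `[0,1)`). -/
def Qset (f : ℝ → ℝ) (S : Set ℝ) : Set ℝ :=
  {x | x ∈ Set.Ico (0:ℝ) 1 ∧ ∃ n : ℕ, f^[n] x ∈ S}

variable {f : ℝ → ℝ} {S : Set ℝ} {lam : ℝ}

lemma horb (hmap : Set.MapsTo f (Set.Ico 0 1) (Set.Ico 0 1)) {x : ℝ}
    (hx : x ∈ Set.Ico (0:ℝ) 1) (n : ℕ) : f^[n] x ∈ Set.Ico (0:ℝ) 1 := by
  induction n with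
  | zero => simpa
  | succ k ih => rw [Function.iterate_succ_apply']; exact hmap ih

lemma hpre {x : ℝ} (hx : x ∈ Set.Ico (0:ℝ) 1) (h : f x ∈ Qset f S) : x ∈ Qset f S := by
  obtain ⟨-, n, hn⟩ := h
  exact ⟨hx, n + 1, by rwa [Function.iterate_succ_apply]⟩

lemma hinv (hmap : Set.MapsTo f (Set.Ico 0 1) (Set.Ico 0 1)) {x : ℝ}
    (hx : x ∈ Set.Ico (0:ℝ) 1) (hq : x ∉ Qset f S) (n : ℕ) :
    f^[n] x ∈ Set.Ico (0:ℝ) 1 ∧ f^[n] x ∉ Qset f S := by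
  induction n with
  | zero => exact ⟨by simpa, by simpa⟩
  | succ k ih =>
    rw [Function.iterate_succ_apply']
    exact ⟨hmap ih.1, fun h => ih.2 (hpre ih.1 h)⟩

lemma hSQ (hSsub : S ⊆ Set.Ico 0 1) : S ⊆ Qset f S :=
  fun s hs => ⟨hSsub hs, 0, by simpa⟩

lemma hQsub : Qset f S ⊆ Set.Ico 0 1 := fun _ h => h.1

lemma master (hlam0 : 0 < lam) (hSsub : S ⊆ Set.Ico 0 1)
    (hpiece : ∀ x ∈ Set.Ico (0:ℝ) 1, ∀ y ∈ Set.Ico (0:ℝ) 1, x < y →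
      (∀ s ∈ S, s ∉ Set.Ioc x y) → f x < f y ∧ f y - f x ≤ lam * (y - x))
    {u v : ℝ} (hu : u ∈ Set.Ico (0:ℝ) 1) (hv : v ∈ Set.Ico (0:ℝ) 1) (huv : u < v)
    (hfree : Set.Ioo u v ∩ Qset f S = ∅) (hvS : v ∉ S) :
    f u < f v ∧ f v - f u ≤ lam * (v - u) ∧ Set.Ioo (f u) (f v) ∩ Qset f S = ∅ := by
  have hSfree : ∀ a b : ℝ, u ≤ a → b ≤ v → ∀ s ∈ S, s ∉ Set.Ioc a b := by
    intro a b ha hb s hs hmem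
    rcases eq_or_lt_of_le (hmem.2.trans hb) with h | h
    · exact hvS (h ▸ hs)
    · exact (Set.eq_empty_iff_forall_notMem.1 hfree s)
        ⟨⟨lt_of_le_of_lt ha hmem.1, h⟩, hSQ hSsub hs⟩
  obtain ⟨hlt, hle⟩ := hpiece u hu v hv huv (hSfree u v le_rfl le_rfl)
  have hsub : Set.Icc u v ⊆ Set.Ico (0:ℝ) 1 :=
    fun t ht => ⟨le_trans hu.1 ht.1, lt_of_le_of_lt ht.2 hv.2⟩
  have hcont : ContinuousOn f (Set.Icc u v) := by
    have hlip : LipschitzOnWith lam.toNNReal f (Set.Icc u v) := by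
      rw [lipschitzOnWith_iff_dist_le_mul]
      intro a ha b hb
      rw [Real.coe_toNNReal _ hlam0.le, Real.dist_eq, Real.dist_eq]
      rcases lt_trichotomy a b with h | h | h
      · obtain ⟨h1, h2⟩ := hpiece a (hsub ha) b (hsub hb) h
          (fun s hs hm => hSfree a b ha.1 hb.2 s hs hm)
        rw [abs_sub_comm, abs_of_pos (sub_pos.2 h1), abs_sub_comm,
          abs_of_pos (sub_pos.2 h)]
        exact h2
      · simp only [h, sub_self, abs_zero]
        positivity
      · obtain ⟨h1, h2⟩ := hpiece b (hsub hb) a (hsub ha) h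
          (fun s hs hm => hSfree b a hb.1 ha.2 s hs hm)
        rw [abs_of_pos (sub_pos.2 h1), abs_of_pos (sub_pos.2 h)]
        exact h2
    exact hlip.continuousOn
  refine ⟨hlt, hle, ?_⟩
  rw [Set.eq_empty_iff_forall_notMem]
  rintro q ⟨hq1, hq2⟩
  obtain ⟨t, ht, hftq⟩ := intermediate_value_Icc huv.le hcont ⟨hq1.1.le, hq1.2.le⟩
  have htQ : t ∈ Qset f S := hpre (hsub ht) (hftq ▸ hq2)
  rcases eq_or_lt_of_le ht.1 with h | h
  · exact absurd hq1.1 (by rw [← hftq, ← h]; exact lt_irrefl _)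
  rcases eq_or_lt_of_le ht.2 with h2 | h2
  · exact absurd hq1.2 (by rw [← hftq, h2]; exact lt_irrefl _)
  · exact (Set.eq_empty_iff_forall_notMem.1 hfree t) ⟨⟨h, h2⟩, htQ⟩

lemma itera (hlam0 : 0 < lam) (hSsub : S ⊆ Set.Ico 0 1)
    (hmap : Set.MapsTo f (Set.Ico 0 1) (Set.Ico 0 1))
    (hpiece : ∀ x ∈ Set.Ico (0:ℝ) 1, ∀ y ∈ Set.Ico (0:ℝ) 1, x < y →
      (∀ s ∈ S, s ∉ Set.Ioc x y) → f x < f y ∧ f y - f x ≤ lam * (y - x))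
    {u v : ℝ} (hu : u ∈ Set.Ico (0:ℝ) 1) (hv : v ∈ Set.Ico (0:ℝ) 1) (huv : u < v)
    (hvQ : v ∉ Qset f S) (hfree : Set.Ioo u v ∩ Qset f S = ∅) (k : ℕ) :
    f^[k] u ∈ Set.Ico (0:ℝ) 1 ∧ f^[k] v ∈ Set.Ico (0:ℝ) 1 ∧ f^[k] v ∉ Qset f S ∧
    f^[k] u < f^[k] v ∧ f^[k] v - f^[k] u ≤ lam ^ k * (v - u) ∧
    Set.Ioo (f^[k] u) (f^[k] v) ∩ Qset f S = ∅ := by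
  induction k with
  | zero => exact ⟨by simpa, by simpa, by simpa, by simpa, by simpa, by simpa⟩
  | succ m ih =>
    obtain ⟨h1, h2, h3, h4, h5, h6⟩ := ih
    have hvS' : f^[m] v ∉ S := fun hs => h3 (hSQ hSsub hs)
    obtain ⟨m1, m2, m3⟩ := master hlam0 hSsub hpiece h1 h2 h4 h6 hvS'
    have e1 : f^[m+1] u = f (f^[m] u) := Function.iterate_succ_apply' f m u
    have e2 : f^[m+1] v = f (f^[m] v) := Function.iterate_succ_apply' f m v
    rw [e1, e2]
    refine ⟨hmap h1, hmap h2, fun h => h3 (hpre h2 h), m1, ?_, m3⟩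
    calc f (f^[m] v) - f (f^[m] u) ≤ lam * (f^[m] v - f^[m] u) := m2
      _ ≤ lam * (lam ^ m * (v - u)) := by
          exact mul_le_mul_of_nonneg_left h5 hlam0.le
      _ = lam ^ (m + 1) * (v - u) := by ring

lemma spk (hlam0 : 0 < lam) (hSsub : S ⊆ Set.Ico 0 1)
    (hmap : Set.MapsTo f (Set.Ico 0 1) (Set.Ico 0 1))
    (hpiece : ∀ x ∈ Set.Ico (0:ℝ) 1, ∀ y ∈ Set.Ico (0:ℝ) 1, x < y →
      (∀ s ∈ S, s ∉ Set.Ioc x y) → f x < f y ∧ f y - f x ≤ lam * (y - x))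
    {a b : ℝ} (ha : a ∈ Set.Ico (0:ℝ) 1) (hb : b ∈ Set.Ico (0:ℝ) 1)
    (haQ : a ∉ Qset f S) (hbQ : b ∉ Qset f S)
    (hfree : Set.Ioo (min a b) (max a b) ∩ Qset f S = ∅) (k : ℕ) :
    |f^[k] b - f^[k] a| ≤ lam ^ k * |b - a| ∧
    Set.Ioo (min (f^[k] a) (f^[k] b)) (max (f^[k] a) (f^[k] b)) ∩ Qset f S = ∅ := by
  rcases lt_trichotomy a b with h | h | h
  · rw [min_eq_left h.le, max_eq_right h.le] at hfree
    obtain ⟨-, -, -, h4, h5, h6⟩ := itera hlam0 hSsub hmap hpiece ha hb h hbQ hfree k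
    rw [min_eq_left h4.le, max_eq_right h4.le]
    rw [abs_of_pos (sub_pos.2 h4), abs_of_pos (sub_pos.2 h)]
    exact ⟨h5, h6⟩
  · subst h
    simp [abs_nonneg, mul_nonneg (pow_nonneg hlam0.le k) (abs_nonneg _)]
  · rw [min_eq_right h.le, max_eq_left h.le] at hfree
    obtain ⟨-, -, -, h4, h5, h6⟩ := itera hlam0 hSsub hmap hpiece hb ha h haQ hfree k
    rw [min_eq_right h4.le, max_eq_left h4.le]
    rw [abs_sub_comm, abs_of_pos (sub_pos.2 h4), abs_sub_comm (b:ℝ) a,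
      abs_of_pos (sub_pos.2 h)]
    exact ⟨h5, h6⟩

noncomputable def aval (f : ℝ → ℝ) (S : Set ℝ) (z : ℝ) : ℝ :=
  sSup (Qset f S ∩ Set.Iic z)

noncomputable def bstar (f : ℝ → ℝ) (S : Set ℝ) (q : ℝ) : ℝ :=
  sInf ((Qset f S ∪ {1}) ∩ Set.Ioi q)

lemma hQ0 (hS0 : (0:ℝ) ∈ S) : (0:ℝ) ∈ Qset f S :=
  ⟨⟨le_refl 0, zero_lt_one⟩, 0, by simpa⟩

lemma aval_spec (hQfin : (Qset f S).Finite) (hS0 : (0:ℝ) ∈ S) {z : ℝ} (hz : 0 ≤ z) :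
    aval f S z ∈ Qset f S ∧ aval f S z ≤ z ∧
    ∀ q ∈ Qset f S, q ≤ z → q ≤ aval f S z := by
  have hne : (Qset f S ∩ Set.Iic z).Nonempty := ⟨0, hQ0 hS0, hz⟩
  have hfin : (Qset f S ∩ Set.Iic z).Finite := hQfin.subset Set.inter_subset_left
  have hmem := hne.csSup_mem hfin
  exact ⟨hmem.1, hmem.2, fun q hq hqz => le_csSup hfin.bddAbove ⟨hq, hqz⟩⟩

lemma bstar_spec (hQfin : (Qset f S).Finite) {q : ℝ} (hq : q < 1) :
    bstar f S q ∈ Qset f S ∪ {1} ∧ q < bstar f S q ∧ bstar f S q ≤ 1 ∧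
    Set.Ioo q (bstar f S q) ∩ Qset f S = ∅ := by
  have hne : ((Qset f S ∪ {1}) ∩ Set.Ioi q).Nonempty := ⟨1, Or.inr rfl, hq⟩
  have hfin : ((Qset f S ∪ {1}) ∩ Set.Ioi q).Finite :=
    ((hQfin.union (Set.finite_singleton 1)).subset Set.inter_subset_left)
  have hmem := hne.csInf_mem hfin
  have hle : ∀ t ∈ (Qset f S ∪ {1}) ∩ Set.Ioi q, bstar f S q ≤ t :=
    fun t ht => csInf_le hfin.bddBelow ht
  refine ⟨hmem.1, hmem.2, hle 1 ⟨Or.inr rfl, hq⟩, ?_⟩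
  rw [Set.eq_empty_iff_forall_notMem]
  rintro t ⟨ht1, ht2⟩
  exact absurd (hle t ⟨Or.inl ht2, ht1.1⟩) (not_le.2 ht1.2)

/-- Characterization of the piece `(q*, b*)`. -/
lemma piece_mem (hQfin : (Qset f S).Finite) (hS0 : (0:ℝ) ∈ S) {z : ℝ}
    (hz : z ∈ Set.Ico (0:ℝ) 1) (hzQ : z ∉ Qset f S) :
    z ∈ Set.Ioo (aval f S z) (bstar f S (aval f S z)) := by
  obtain ⟨h1, h2, h3⟩ := aval_spec hQfin hS0 hz.1
  have hq1 : aval f S z < 1 := h1.1.2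
  obtain ⟨b1, b2, b3, b4⟩ := bstar_spec hQfin hq1
  have hlt : aval f S z < z := lt_of_le_of_ne h2 (fun h => hzQ (h ▸ h1))
  refine ⟨hlt, ?_⟩
  by_contra hbz
  push_neg at hbz
  rcases b1 with hb | hb
  · exact absurd (h3 _ hb hbz) (not_le.2 b2)
  · rw [Set.mem_singleton_iff] at hb
    rw [hb] at hbz
    exact absurd hz.2 (not_lt.2 hbz)

lemma piece_mem' (hQfin : (Qset f S).Finite) (hS0 : (0:ℝ) ∈ S) {q z : ℝ}
    (hq : q ∈ Qset f S) (hz : z ∈ Set.Ioo q (bstar f S q)) :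
    z ∈ Set.Ico (0:ℝ) 1 ∧ z ∉ Qset f S ∧ aval f S z = q := by
  obtain ⟨b1, b2, b3, b4⟩ := bstar_spec hQfin hq.1.2
  have hzD : z ∈ Set.Ico (0:ℝ) 1 := by
    constructor
    · exact le_trans hq.1.1 (le_of_lt hz.1)
    · rcases eq_or_lt_of_le b3 with h | h
      · rw [← h]; exact hz.2
      · exact lt_trans hz.2 h
  have hzQ : z ∉ Qset f S := fun h =>
    (Set.eq_empty_iff_forall_notMem.1 b4 z) ⟨hz, h⟩
  obtain ⟨h1, h2, h3⟩ := aval_spec hQfin hS0 hzD.1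
  refine ⟨hzD, hzQ, le_antisymm ?_ (h3 q hq hz.1.le)⟩
  by_contra hgt
  push_neg at hgt
  exact (Set.eq_empty_iff_forall_notMem.1 b4 (aval f S z))
    ⟨⟨hgt, lt_of_le_of_lt h2 hz.2⟩, h1⟩

/-- Equal `aval`s mean no `Q`-point strictly between. -/
lemma aeq_free (hQfin : (Qset f S).Finite) (hS0 : (0:ℝ) ∈ S) {z₁ z₂ : ℝ}
    (h1 : 0 ≤ z₁) (h2 : 0 ≤ z₂) (heq : aval f S z₁ = aval f S z₂) :
    Set.Ioo (min z₁ z₂) (max z₁ z₂) ∩ Qset f S = ∅ := by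
  rw [Set.eq_empty_iff_forall_notMem]
  rintro t ⟨ht1, ht2⟩
  rcases le_total z₁ z₂ with h | h
  · rw [min_eq_left h] at ht1; rw [max_eq_right h] at ht1
    have := (aval_spec hQfin hS0 h2).2.2 t ht2 ht1.2.le
    rw [← heq] at this
    exact absurd (lt_of_le_of_lt (this.trans (aval_spec hQfin hS0 h1).2.1) ht1.1)
      (lt_irrefl t)
  · rw [min_eq_right h] at ht1; rw [max_eq_left h] at ht1
    have := (aval_spec hQfin hS0 h1).2.2 t ht2 ht1.2.le
    rw [heq] at this
    exact absurd (lt_of_le_of_lt (this.trans (aval_spec hQfin hS0 h2).2.1) ht1.1)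
      (lt_irrefl t)

lemma omega_eq {f : ℝ → ℝ} {x y : ℝ} {n d : ℕ} (hd : 1 ≤ d)
    (hconv : ∀ i : ℕ, Filter.Tendsto (fun j : ℕ => f^[n + j*d + i] x)
      Filter.atTop (nhds (f^[i] y))) :
    {c | MapClusterPt c Filter.atTop fun k => f^[k] x} = Set.range fun k => f^[k] y := by
  have hd0 : 0 < d := hd
  ext c
  simp only [Set.mem_setOf_eq, Set.mem_range]
  constructor
  · intro hc
    by_contra hcF
    push_neg at hcF
    set T : Finset ℝ := (Finset.range d).image (fun i => f^[i] y) with hT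
    have hTne : T.Nonempty := ⟨f^[0] y, Finset.mem_image.2 ⟨0, Finset.mem_range.2 hd0, rfl⟩⟩
    set δ : ℝ := Finset.min' (T.image fun t => dist c t) (hTne.image _) with hδ
    have hδpos : 0 < δ := by
      have hmem := Finset.min'_mem (T.image fun t => dist c t) (hTne.image _)
      rw [← hδ] at hmem
      obtain ⟨t, ht, hdist⟩ := Finset.mem_image.1 hmem
      obtain ⟨i, -, rfl⟩ := Finset.mem_image.1 ht
      rw [← hdist]
      exact dist_pos.2 fun h => hcF i h.symm
    have hδle : ∀ i, i < d → δ ≤ dist c (f^[i] y) := fun i hi =>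
      Finset.min'_le _ _ (Finset.mem_image.2
        ⟨f^[i] y, Finset.mem_image.2 ⟨i, Finset.mem_range.2 hi, rfl⟩, rfl⟩)
    have hev : ∀ᶠ j : ℕ in Filter.atTop, ∀ i ∈ Finset.range d,
        dist (f^[n + j*d + i] x) (f^[i] y) < δ/2 := by
      rw [Filter.eventually_all_finset]
      intro i _
      obtain ⟨J0, hJ0⟩ := Metric.tendsto_atTop.1 (hconv i) (δ/2) (by positivity)
      exact Filter.eventually_atTop.2 ⟨J0, fun j hj => hJ0 j hj⟩
    obtain ⟨J, hJ⟩ := Filter.eventually_atTop.1 hev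
    have hkey : ∀ N, N ≥ n + J*d → ¬ (dist (f^[N] x) c < δ/2) := by
      intro N hN
      have hdm := Nat.div_add_mod (N - n) d
      have hcm : (N-n)/d * d = d * ((N-n)/d) := Nat.mul_comm _ _
      have hdecomp : N = n + ((N-n)/d)*d + ((N-n) % d) := by omega
      have hJle : J ≤ (N-n)/d := (Nat.le_div_iff_mul_le hd0).2 (by omega)
      have hmod : (N-n) % d < d := Nat.mod_lt _ hd0
      have h1 := hJ ((N-n)/d) hJle ((N-n) % d) (Finset.mem_range.2 hmod)
      rw [← hdecomp] at h1
      have h2 := hδle ((N-n) % d) hmod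
      have h3 := dist_triangle c (f^[N] x) (f^[(N-n) % d] y)
      rw [dist_comm c (f^[N] x)] at h3
      intro h4
      linarith
    have hfreq := (mapClusterPt_iff_frequently.1 hc) (Metric.ball c (δ/2))
      (Metric.ball_mem_nhds c (by positivity))
    obtain ⟨N, hN1, hN2⟩ := (hfreq.and_eventually
      (Filter.eventually_atTop.2 ⟨n + J*d, hkey⟩)).exists
    exact hN2 (by simpa [Metric.mem_ball] using hN1)
  · rintro ⟨i, rfl⟩
    have hφ : StrictMono (fun j : ℕ => n + j*d + i) := by
      intro a b hab
      have : a * d < b * d := Nat.mul_lt_mul_of_lt_of_le hab (le_refl d) hd0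
      show n + a*d + i < n + b*d + i
      omega
    exact MapClusterPt.of_comp (hφ.tendsto_atTop) ((hconv i).mapClusterPt)

lemma avoid {T : Set ℝ} (hT : T.Finite) (z : ℝ) :
    ∃ ε > 0, ∀ t ∈ T, t ≠ z → ε ≤ |t - z| := by
  classical
  by_cases hne : ((fun t => |t - z|) '' (T \ {z})).Nonempty
  · have hfin : ((fun t => |t - z|) '' (T \ {z})).Finite := (hT.diff (t := {z})).image _
    have hmem := hne.csInf_mem hfin
    refine ⟨sInf _, ?_, fun t ht htz => csInf_le hfin.bddBelow ⟨t, ⟨ht, htz⟩, rfl⟩⟩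
    obtain ⟨t, ht, heq⟩ := hmem
    rw [← heq]
    exact abs_pos.2 (sub_ne_zero.2 ht.2)
  · exact ⟨1, one_pos, fun t ht htz => absurd ⟨|t - z|, ⟨t, ⟨ht, htz⟩, rfl⟩⟩ hne⟩

lemma cont_at (hlam0 : 0 < lam) (hSfin : S.Finite) (hS0 : (0:ℝ) ∈ S)
    (hpiece : ∀ x ∈ Set.Ico (0:ℝ) 1, ∀ y ∈ Set.Ico (0:ℝ) 1, x < y →
      (∀ s ∈ S, s ∉ Set.Ioc x y) → f x < f y ∧ f y - f x ≤ lam * (y - x))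
    {z : ℝ} (hz : z ∈ Set.Ico (0:ℝ) 1) (hzS : z ∉ S) : ContinuousAt f z := by
  have hz0 : 0 < z := lt_of_le_of_ne hz.1 (fun h => hzS (h ▸ hS0))
  obtain ⟨ε₀, hε₀, hεS⟩ := avoid hSfin z
  set ε₁ : ℝ := min ε₀ (min z (1 - z)) with hε₁
  have hε₁pos : 0 < ε₁ := lt_min hε₀ (lt_min hz0 (by linarith [hz.2]))
  have hSloc : ∀ a b : ℝ, z - ε₁ < a → b < z + ε₁ → ∀ s ∈ S, s ∉ Set.Ioc a b := by
    intro a b ha hb s hs hmem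
    have h1 : ε₁ ≤ ε₀ := min_le_left _ _
    have hne : s ≠ z := fun h => hzS (h ▸ hs)
    have := hεS s hs hne
    have habs : |s - z| < ε₁ := by
      rw [abs_lt]
      exact ⟨by linarith [hmem.1], by linarith [hmem.2]⟩
    linarith [habs, this]
  have hlip : ∀ y : ℝ, |y - z| < ε₁ → |f y - f z| ≤ lam * |y - z| := by
    intro y hy
    have hy1 : z - ε₁ < y := by have := abs_lt.1 hy; linarith [this.1]
    have hy2 : y < z + ε₁ := by have := abs_lt.1 hy; linarith [this.2]
    have hymem : y ∈ Set.Ico (0:ℝ) 1 := by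
      constructor
      · have : ε₁ ≤ z := min_le_of_right_le (min_le_left _ _)
        linarith
      · have : ε₁ ≤ 1 - z := min_le_of_right_le (min_le_right _ _)
        linarith
    rcases lt_trichotomy y z with h | h | h
    · obtain ⟨h1, h2⟩ := hpiece y hymem z hz h (hSloc y z hy1 (by linarith))
      rw [abs_sub_comm, abs_of_pos (sub_pos.2 h1), abs_sub_comm y z,
        abs_of_pos (sub_pos.2 h)]
      exact h2
    · simp only [h, sub_self, abs_zero]
      positivity
    · obtain ⟨h1, h2⟩ := hpiece z hz y hymem h (hSloc z y (by linarith) hy2)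
      rw [abs_of_pos (sub_pos.2 h1), abs_of_pos (sub_pos.2 h)]
      exact h2
  rw [Metric.continuousAt_iff]
  intro ε hε
  refine ⟨min ε₁ (ε / lam / 2), lt_min hε₁pos (by positivity), fun y hy => ?_⟩
  rw [Real.dist_eq] at hy ⊢
  have h1 : |y - z| < ε₁ := lt_of_lt_of_le hy (min_le_left _ _)
  have h2 : |y - z| < ε / lam / 2 := lt_of_lt_of_le hy (min_le_right _ _)
  calc |f y - f z| ≤ lam * |y - z| := hlip y h1
    _ < lam * (ε / lam) := by
        apply lt_of_le_of_lt (mul_le_mul_of_nonneg_left h2.le hlam0.le)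
        rw [mul_lt_mul_iff_right₀ hlam0]
        linarith [div_pos (div_pos hε hlam0) two_pos]
    _ = ε := by field_simp

lemma iterb (hlam0 : 0 < lam) (hSsub : S ⊆ Set.Ico 0 1)
    (hmap : Set.MapsTo f (Set.Ico 0 1) (Set.Ico 0 1))
    (hpiece : ∀ x ∈ Set.Ico (0:ℝ) 1, ∀ y ∈ Set.Ico (0:ℝ) 1, x < y →
      (∀ s ∈ S, s ∉ Set.Ioc x y) → f x < f y ∧ f y - f x ≤ lam * (y - x))
    {u c : ℝ} (hu : u ∈ Set.Ico (0:ℝ) 1) (huQ : u ∉ Qset f S)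
    (hc : c ∈ Set.Ico (0:ℝ) 1) (huc : u < c)
    (hfree : Set.Ioo u c ∩ Qset f S = ∅) {m : ℕ}
    (hS' : ∀ j, j < m → f^[j] c ∉ S) :
    ∀ j, j ≤ m → f^[j] u < f^[j] c ∧ Set.Ioo (f^[j] u) (f^[j] c) ∩ Qset f S = ∅ := by
  intro j
  induction j with
  | zero => intro _; exact ⟨by simpa, by simpa⟩
  | succ i ih =>
    intro hi
    obtain ⟨h1, h2⟩ := ih (by omega)
    have hiu := hinv hmap hu huQ i
    obtain ⟨m1, -, m3⟩ := master hlam0 hSsub hpiece hiu.1 (horb hmap hc i) h1 h2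
      (hS' i (by omega))
    rw [Function.iterate_succ_apply', Function.iterate_succ_apply']
    exact ⟨m1, m3⟩

lemma contra (hlam0 : 0 < lam) (hSsub : S ⊆ Set.Ico 0 1)
    (hmap : Set.MapsTo f (Set.Ico 0 1) (Set.Ico 0 1))
    (hpiece : ∀ x ∈ Set.Ico (0:ℝ) 1, ∀ y ∈ Set.Ico (0:ℝ) 1, x < y →
      (∀ s ∈ S, s ∉ Set.Ioc x y) → f x < f y ∧ f y - f x ≤ lam * (y - x))
    (hnolps : ∀ x : ℝ, (x ∈ S ∧ x ≠ 0) ∨ x = 1 → ∀ n : ℕ, 1 ≤ n →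
      ¬ Filter.Tendsto (f^[n]) (nhdsWithin x (Set.Iio x)) (nhds x))
    {d : ℕ} (hd : 1 ≤ d) {c : ℝ} (hc1 : (c ∈ S ∧ c ≠ 0) ∨ c = 1) (hcle : c ≤ 1)
    {v : ℕ → ℝ} (hvD : ∀ k, v k ∈ Set.Ico (0:ℝ) 1) (hvQ : ∀ k, v k ∉ Qset f S)
    (hvc : ∀ k, v k < c) (hfree : ∀ k, Set.Ioo (v k) c ∩ Qset f S = ∅)
    (hvlim : Filter.Tendsto v Filter.atTop (nhds c))
    (hstep : ∀ k, f^[d] (v k) = v (k+1)) : False := by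
  apply hnolps c hc1 d hd
  rw [Metric.tendsto_nhdsWithin_nhds]
  intro ε hε
  obtain ⟨K, hK⟩ := Metric.tendsto_atTop.1 hvlim ε hε
  refine ⟨c - v K, by linarith [hvc K], fun {z} hz hdz => ?_⟩
  rw [Real.dist_eq] at hdz
  have hzc : z < c := hz
  have hzK : v K < z := by
    rw [abs_of_neg (by linarith : z - c < 0)] at hdz
    linarith
  have hzQ : z ∉ Qset f S := fun h =>
    (Set.eq_empty_iff_forall_notMem.1 (hfree K) z) ⟨⟨hzK, hzc⟩, h⟩
  have hzD : z ∈ Set.Ico (0:ℝ) 1 := ⟨le_trans (hvD K).1 hzK.le, lt_of_lt_of_le hzc hcle⟩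
  have hfree1 : Set.Ioo (v K) z ∩ Qset f S = ∅ := by
    rw [Set.eq_empty_iff_forall_notMem]
    rintro t ⟨ht1, ht2⟩
    exact (Set.eq_empty_iff_forall_notMem.1 (hfree K) t) ⟨⟨ht1.1, ht1.2.trans hzc⟩, ht2⟩
  -- lower bound : v (K+1) < f^[d] z
  have hlow : v (K+1) < f^[d] z := by
    have := (itera hlam0 hSsub hmap hpiece (hvD K) hzD hzK hzQ hfree1 d).2.2.2.1
    rwa [hstep K] at this
  have hKlow : c - ε < v (K+1) := by
    have := hK (K+1) (by omega)
    rw [Real.dist_eq, abs_of_neg (by linarith [hvc (K+1)] : v (K+1) - c < 0)] at this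
    linarith
  -- upper bound : f^[d] z < c
  obtain ⟨k₂, hk₂⟩ := (hvlim.eventually (eventually_gt_nhds hzc)).exists
  have hfree2 : Set.Ioo z (v k₂) ∩ Qset f S = ∅ := by
    rw [Set.eq_empty_iff_forall_notMem]
    rintro t ⟨ht1, ht2⟩
    exact (Set.eq_empty_iff_forall_notMem.1 (hfree K) t)
      ⟨⟨hzK.trans ht1.1, ht1.2.trans (hvc k₂)⟩, ht2⟩
  have hhigh : f^[d] z < c := by
    have := (itera hlam0 hSsub hmap hpiece hzD (hvD k₂) hk₂ (hvQ k₂) hfree2 d).2.2.2.1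
    rw [hstep k₂] at this
    exact this.trans (hvc (k₂+1))
  rw [Real.dist_eq, abs_of_neg (by linarith : f^[d] z - c < 0)]
  linarith

lemma aeq_of_free (hQfin : (Qset f S).Finite) (hS0 : (0:ℝ) ∈ S) {z₁ z₂ : ℝ}
    (h1 : z₁ ∈ Set.Ico (0:ℝ) 1) (h2 : z₂ ∈ Set.Ico (0:ℝ) 1)
    (hq1 : z₁ ∉ Qset f S) (hq2 : z₂ ∉ Qset f S)
    (hfree : Set.Ioo (min z₁ z₂) (max z₁ z₂) ∩ Qset f S = ∅) :
    aval f S z₁ = aval f S z₂ := by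
  have key : ∀ u v : ℝ, u ∈ Set.Ico (0:ℝ) 1 → v ∈ Set.Ico (0:ℝ) 1 → v ∉ Qset f S →
      u ≤ v → Set.Ioo u v ∩ Qset f S = ∅ → aval f S u = aval f S v := by
    intro u v hu hv hvQ huv hf
    obtain ⟨u1, u2, u3⟩ := aval_spec hQfin hS0 hu.1
    obtain ⟨v1, v2, v3⟩ := aval_spec hQfin hS0 hv.1
    refine le_antisymm (v3 _ u1 (u2.trans huv)) ?_
    have hvz : aval f S v ≤ u := by
      by_contra hgt
      push_neg at hgt
      have hne : aval f S v ≠ v := fun h => hvQ (h ▸ v1)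
      exact (Set.eq_empty_iff_forall_notMem.1 hf (aval f S v))
        ⟨⟨hgt, lt_of_le_of_ne v2 hne⟩, v1⟩
    exact u3 _ v1 hvz
  rcases le_total z₁ z₂ with h | h
  · rw [min_eq_left h, max_eq_right h] at hfree
    exact key z₁ z₂ h1 h2 hq2 h hfree
  · rw [min_eq_right h, max_eq_left h] at hfree
    exact (key z₂ z₁ h2 h1 hq1 h hfree).symm

lemma finish (hd : 1 ≤ d) {x y : ℝ} {n : ℕ} {s : ℕ → ℝ}
    (hsdef : ∀ j, s j = f^[n + j*d] x)
    (hstep : ∀ j, f^[d] (s j) = s (j+1))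
    (hHB : ∀ i j, dist (f^[i] (s j)) (f^[i] y) ≤ lam^i * dist (s j) y)
    (hslim : Filter.Tendsto s Filter.atTop (nhds y)) :
    f^[d] y = y ∧
    ({c | MapClusterPt c Filter.atTop fun k => f^[k] x} = Set.range fun k => f^[k] y) := by
  have hdist0 : Filter.Tendsto (fun j => dist (s j) y) Filter.atTop (nhds 0) :=
    tendsto_iff_dist_tendsto_zero.1 hslim
  have htend : ∀ i, Filter.Tendsto (fun j => f^[i] (s j)) Filter.atTop (nhds (f^[i] y)) := by
    intro i
    rw [tendsto_iff_dist_tendsto_zero]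
    apply squeeze_zero (fun j => dist_nonneg) (fun j => hHB i j)
    have := hdist0.const_mul (lam^i)
    simpa using this
  have hfd : f^[d] y = y := by
    have h2 : Filter.Tendsto (fun j => f^[d] (s j)) Filter.atTop (nhds y) := by
      have he : (fun j => f^[d] (s j)) = fun j => s (j+1) := funext hstep
      rw [he]
      exact hslim.comp (tendsto_add_atTop_nat 1)
    exact tendsto_nhds_unique (htend d) h2
  refine ⟨hfd, omega_eq (n := n) hd ?_⟩
  intro i
  have heqf : (fun j : ℕ => f^[n + j*d + i] x) = fun j => f^[i] (s j) := by
    funext j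
    rw [hsdef j, ← Function.iterate_add_apply]
    congr 1
    omega
  rw [heqf]
  exact htend i

lemma caseA {x y : ℝ} {n d : ℕ} (hd : 1 ≤ d) (hy : f^[n] x = y) (hper : f^[d] y = y) :
    {c | MapClusterPt c Filter.atTop fun k => f^[k] x} = Set.range fun k => f^[k] y := by
  apply omega_eq hd (n := n)
  intro i
  have hall : ∀ j : ℕ, f^[n + j*d] x = y := by
    intro j
    induction j with
    | zero => simpa using hy
    | succ m ih =>
      have he : n + (m+1)*d = d + (n + m*d) := by
        have : (m+1)*d = m*d + d := Nat.succ_mul m d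
        omega
      rw [he, Function.iterate_add_apply, ih, hper]
  have heqf : (fun j : ℕ => f^[n + j*d + i] x) = fun _ => f^[i] y := by
    funext j
    have he : n + j*d + i = i + (n + j*d) := by omega
    rw [he, Function.iterate_add_apply, hall j]
  rw [heqf]
  exact tendsto_const_nhds

lemma part2 (hlam0 : 0 < lam) (hlam1 : lam < 1) (hSsub : S ⊆ Set.Ico 0 1)
    (hS0 : (0:ℝ) ∈ S)
    (hmap : Set.MapsTo f (Set.Ico 0 1) (Set.Ico 0 1))
    (hpiece : ∀ x ∈ Set.Ico (0:ℝ) 1, ∀ y ∈ Set.Ico (0:ℝ) 1, x < y →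
      (∀ s ∈ S, s ∉ Set.Ioc x y) → f x < f y ∧ f y - f x ≤ lam * (y - x))
    (hQfin : (Qset f S).Finite) :
    {O : Set ℝ | ∃ x, x ∈ Set.Ico (0:ℝ) 1 ∧ (∃ p, 1 ≤ p ∧ f^[p] x = x) ∧
        O = Set.range fun n => f^[n] x}.Finite := by
  classical
  set P : Set ℝ := {z | z ∈ Set.Ico (0:ℝ) 1 ∧ ∃ p, 1 ≤ p ∧ f^[p] z = z} with hP
  have hPfin : P.Finite := by
    have h2 : (P \ Qset f S).Finite := by
      apply Set.Finite.of_finite_image (f := aval f S)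
      · apply hQfin.subset
        rintro _ ⟨z, hz, rfl⟩
        exact (aval_spec hQfin hS0 hz.1.1.1).1
      · intro z₁ h₁ z₂ h₂ heq
        by_contra hne
        have hfree := aeq_free hQfin hS0 h₁.1.1.1 h₂.1.1.1 heq
        obtain ⟨p₁, hp₁, hper₁⟩ := h₁.1.2
        obtain ⟨p₂, hp₂, hper₂⟩ := h₂.1.2
        have hk1 : f^[p₁ * p₂] z₁ = z₁ := by
          rw [Function.iterate_mul]
          exact Function.iterate_fixed hper₁ p₂
        have hk2 : f^[p₁ * p₂] z₂ = z₂ := by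
          rw [Nat.mul_comm, Function.iterate_mul]
          exact Function.iterate_fixed hper₂ p₁
        have hspk := (spk hlam0 hSsub hmap hpiece h₁.1.1 h₂.1.1 h₁.2 h₂.2 hfree
          (p₁ * p₂)).1
        rw [hk1, hk2] at hspk
        have hkpos : p₁ * p₂ ≠ 0 := by positivity
        have hlt : lam ^ (p₁ * p₂) < 1 := pow_lt_one₀ hlam0.le hlam1 hkpos
        have habs : 0 < |z₂ - z₁| := abs_pos.2 (sub_ne_zero.2 (Ne.symm hne))
        nlinarith [hspk, hlt, habs]
    have hsub : P ⊆ (P \ Qset f S) ∪ Qset f S := by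
      intro z hz
      by_cases h : z ∈ Qset f S
      · exact Or.inr h
      · exact Or.inl ⟨hz, h⟩
    exact ((h2.union hQfin).subset hsub)
  have himg : {O : Set ℝ | ∃ x, x ∈ Set.Ico (0:ℝ) 1 ∧ (∃ p, 1 ≤ p ∧ f^[p] x = x) ∧
      O = Set.range fun n => f^[n] x} = (fun z => Set.range fun n => f^[n] z) '' P := by
    ext O
    constructor
    · rintro ⟨x, hx1, hx2, rfl⟩
      exact ⟨x, ⟨hx1, hx2⟩, rfl⟩
    · rintro ⟨z, hz, rfl⟩
      exact ⟨z, hz.1, hz.2, rfl⟩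
  rw [himg]
  exact hPfin.image _

lemma part1 (hlam0 : 0 < lam) (hlam1 : lam < 1)
    (hSfin : S.Finite) (hS0 : (0:ℝ) ∈ S) (hSsub : S ⊆ Set.Ico 0 1)
    (hmap : Set.MapsTo f (Set.Ico 0 1) (Set.Ico 0 1))
    (hpiece : ∀ x ∈ Set.Ico (0:ℝ) 1, ∀ y ∈ Set.Ico (0:ℝ) 1, x < y →
      (∀ s ∈ S, s ∉ Set.Ioc x y) → f x < f y ∧ f y - f x ≤ lam * (y - x))
    (hnolps : ∀ x : ℝ, (x ∈ S ∧ x ≠ 0) ∨ x = 1 → ∀ n : ℕ, 1 ≤ n →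
      ¬ Filter.Tendsto (f^[n]) (nhdsWithin x (Set.Iio x)) (nhds x))
    (hQfin : (Qset f S).Finite) :
    ∀ x ∈ Set.Ico (0:ℝ) 1, ∃ y ∈ Set.Ico (0:ℝ) 1,
      (∃ p, 1 ≤ p ∧ f^[p] y = y) ∧
      ({c | MapClusterPt c Filter.atTop fun k => f^[k] x} =
        Set.range fun k => f^[k] y) := by
  classical
  intro x hx
  by_cases hA : ∃ n m : ℕ, n < m ∧ f^[n] x = f^[m] x
  · obtain ⟨n, m, hnm, heq⟩ := hA
    have hd : 1 ≤ m - n := by omega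
    have hper : f^[m - n] (f^[n] x) = f^[n] x := by
      rw [← Function.iterate_add_apply, show m - n + n = m by omega, ← heq]
    exact ⟨f^[n] x, horb hmap hx n, ⟨m - n, hd, hper⟩, caseA hd rfl hper⟩
  · push_neg at hA
    have hesc : ∃ n₀, f^[n₀] x ∉ Qset f S := by
      by_contra h
      push_neg at h
      obtain ⟨a, -, b, -, hab, heq⟩ := Set.infinite_univ.exists_ne_map_eq_of_mapsTo
        (f := fun n : ℕ => f^[n] x) (fun n _ => h n) hQfin
      rcases hab.lt_or_gt with h' | h'
      · exact hA a b h' heq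
      · exact hA b a h' heq.symm
    obtain ⟨n₀, hn₀⟩ := hesc
    have hxD0 := horb hmap hx n₀
    have htail : ∀ k, f^[n₀ + k] x ∈ Set.Ico (0:ℝ) 1 ∧ f^[n₀ + k] x ∉ Qset f S := by
      intro k
      have h := hinv hmap hxD0 hn₀ k
      rwa [← Function.iterate_add_apply, Nat.add_comm k n₀] at h
    have hpig : ∃ a b : ℕ, a < b ∧
        aval f S (f^[n₀ + a] x) = aval f S (f^[n₀ + b] x) := by
      obtain ⟨a, -, b, -, hab, heq⟩ := Set.infinite_univ.exists_ne_map_eq_of_mapsTo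
        (f := fun k : ℕ => aval f S (f^[n₀ + k] x))
        (fun k _ => (aval_spec hQfin hS0 (htail k).1.1).1) hQfin
      rcases hab.lt_or_gt with h' | h'
      · exact ⟨a, b, h', heq⟩
      · exact ⟨b, a, h', heq.symm⟩
    obtain ⟨a, b, hab, havaleq⟩ := hpig
    set n : ℕ := n₀ + a with hn
    set d : ℕ := b - a with hdd
    have hd : 1 ≤ d := by omega
    set s : ℕ → ℝ := fun j => f^[n + j*d] x with hs
    have hsdef : ∀ j, s j = f^[n + j*d] x := fun j => rfl
    have hsD : ∀ j, s j ∈ Set.Ico (0:ℝ) 1 ∧ s j ∉ Qset f S := by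
      intro j
      have h := htail (a + j*d)
      rwa [show n₀ + (a + j*d) = n + j*d by omega] at h
    have hstep : ∀ j, f^[d] (s j) = s (j+1) := by
      intro j
      rw [hsdef j, hsdef (j+1), ← Function.iterate_add_apply]
      congr 1
      have : (j+1)*d = j*d + d := Nat.succ_mul j d
      omega
    have hs0 : aval f S (s 0) = aval f S (s 1) := by
      have e0 : s 0 = f^[n₀ + a] x := by rw [hsdef 0]; congr 1; omega
      have e1 : s 1 = f^[n₀ + b] x := by rw [hsdef 1]; congr 1; omega
      rw [e0, e1]
      exact havaleq
    set q : ℝ := aval f S (s 0) with hq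
    have hqQ : q ∈ Qset f S := (aval_spec hQfin hS0 (hsD 0).1.1).1
    have hinvariant : ∀ j, aval f S (s j) = q ∧ aval f S (s (j+1)) = q ∧
        |s (j+1) - s j| ≤ (lam^d)^j * |s 1 - s 0| := by
      intro j
      induction j with
      | zero => exact ⟨rfl, hs0.symm, by simp⟩
      | succ i ih =>
        obtain ⟨i1, i2, i3⟩ := ih
        have hfree := aeq_free hQfin hS0 (hsD i).1.1 (hsD (i+1)).1.1
          (i1.trans i2.symm)
        have hspk := spk hlam0 hSsub hmap hpiece (hsD i).1 (hsD (i+1)).1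
          (hsD i).2 (hsD (i+1)).2 hfree d
        rw [hstep i, hstep (i+1)] at hspk
        have haeq2 : aval f S (s (i+2)) = q := by
          have := aeq_of_free hQfin hS0 (hsD (i+1)).1 (hsD (i+2)).1
            (hsD (i+1)).2 (hsD (i+2)).2 hspk.2
          rw [← this]
          exact i2
        refine ⟨i2, haeq2, ?_⟩
        calc |s (i+1+1) - s (i+1)| ≤ lam^d * |s (i+1) - s i| := hspk.1
          _ ≤ lam^d * ((lam^d)^i * |s 1 - s 0|) :=
              mul_le_mul_of_nonneg_left i3 (pow_nonneg hlam0.le d)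
          _ = (lam^d)^(i+1) * |s 1 - s 0| := by ring
    have hcauchy : CauchySeq s := by
      apply cauchySeq_of_le_geometric (lam^d) (|s 1 - s 0|)
        (pow_lt_one₀ hlam0.le hlam1 (by omega))
      intro j
      rw [Real.dist_eq, abs_sub_comm, mul_comm]
      exact (hinvariant j).2.2
    obtain ⟨ystar, hylim⟩ := cauchySeq_tendsto_of_complete hcauchy
    set bq : ℝ := bstar f S q with hbq
    have hsIoo : ∀ j, s j ∈ Set.Ioo q bq := by
      intro j
      have h := piece_mem hQfin hS0 (hsD j).1 (hsD j).2
      rwa [(hinvariant j).1] at h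
    obtain ⟨hbmem, hqb, hble, hbfree⟩ := bstar_spec hQfin hqQ.1.2
    have hyIcc : ystar ∈ Set.Icc q bq := isClosed_Icc.mem_of_tendsto hylim
      (Filter.Eventually.of_forall (fun j => Set.Ioo_subset_Icc_self (hsIoo j)))
    rcases eq_or_lt_of_le hyIcc.1 with hyq | hyq
    · -- left endpoint: q is periodic
      have hslimq : Filter.Tendsto s Filter.atTop (nhds q) := hyq ▸ hylim
      have hHB : ∀ i j, dist (f^[i] (s j)) (f^[i] q) ≤ lam^i * dist (s j) q := by
        intro i j
        have hfree1 : Set.Ioo q (s j) ∩ Qset f S = ∅ := by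
          rw [Set.eq_empty_iff_forall_notMem]
          rintro t ⟨ht1, ht2⟩
          exact (Set.eq_empty_iff_forall_notMem.1 hbfree t)
            ⟨⟨ht1.1, ht1.2.trans (hsIoo j).2⟩, ht2⟩
        have hit := itera hlam0 hSsub hmap hpiece hqQ.1 (hsD j).1 (hsIoo j).1
          (hsD j).2 hfree1 i
        rw [Real.dist_eq, Real.dist_eq, abs_of_pos (sub_pos.2 hit.2.2.2.1),
          abs_of_pos (sub_pos.2 (hsIoo j).1)]
        exact hit.2.2.2.2.1
      obtain ⟨hfd, homega⟩ := finish hd hsdef hstep hHB hslimq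
      exact ⟨q, hqQ.1, ⟨d, hd, hfd⟩, homega⟩
    rcases eq_or_lt_of_le hyIcc.2 with hyb | hyb
    · -- right endpoint: contradiction
      exfalso
      have hslimb : Filter.Tendsto s Filter.atTop (nhds bq) := hyb ▸ hylim
      have hfreek : ∀ k, Set.Ioo (s k) bq ∩ Qset f S = ∅ := by
        intro k
        rw [Set.eq_empty_iff_forall_notMem]
        rintro t ⟨ht1, ht2⟩
        exact (Set.eq_empty_iff_forall_notMem.1 hbfree t)
          ⟨⟨(hsIoo k).1.trans ht1.1, ht1.2⟩, ht2⟩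
      have hbq0 : (0:ℝ) ≤ q := hqQ.1.1
      rcases hbmem with hbQ | hb1
      · by_cases hbS : bq ∈ S
        · exact contra hlam0 hSsub hmap hpiece hnolps hd
            (Or.inl ⟨hbS, by linarith [hqb]⟩) hble
            (fun k => (hsD k).1) (fun k => (hsD k).2) (fun k => (hsIoo k).2)
            hfreek hslimb hstep
        · obtain ⟨hbD, mex⟩ := hbQ
          have hw : f^[Nat.find mex] bq ∈ S := Nat.find_spec mex
          have hSj : ∀ j, j < Nat.find mex → f^[j] bq ∉ S :=
            fun j hj => Nat.find_min mex hj
          set m₀ : ℕ := Nat.find mex with hm₀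
          have hchain : ∀ k, f^[m₀] (s k) < f^[m₀] bq ∧
              Set.Ioo (f^[m₀] (s k)) (f^[m₀] bq) ∩ Qset f S = ∅ := by
            intro k
            exact iterb hlam0 hSsub hmap hpiece (hsD k).1 (hsD k).2 hbD
              (hsIoo k).2 (hfreek k) hSj m₀ le_rfl
          have hvlim : ∀ j, j ≤ m₀ →
              Filter.Tendsto (fun k => f^[j] (s k)) Filter.atTop (nhds (f^[j] bq)) := by
            intro j
            induction j with
            | zero => intro _; simpa using hslimb
            | succ i ih =>
              intro hi
              have hci : ContinuousAt f (f^[i] bq) :=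
                cont_at hlam0 hSfin hS0 hpiece (horb hmap hbD i) (hSj i (by omega))
              have hcomp := hci.tendsto.comp (ih (by omega))
              have he : (fun k => f^[i+1] (s k)) = f ∘ (fun k => f^[i] (s k)) := by
                funext k
                exact Function.iterate_succ_apply' f i (s k)
              rw [Function.iterate_succ_apply' f i bq, he]
              exact hcomp
          have hw0 : f^[m₀] bq ≠ 0 := by
            have h0 := (horb hmap (hsD 0).1 m₀).1
            have := (hchain 0).1
            intro hzero
            rw [hzero] at this
            linarith
          refine contra hlam0 hSsub hmap hpiece hnolps hd
            (Or.inl ⟨hw, hw0⟩) (hSsub hw).2.le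
            (v := fun k => f^[m₀] (s k))
            (fun k => horb hmap (hsD k).1 m₀)
            (fun k => (hinv hmap (hsD k).1 (hsD k).2 m₀).2)
            (fun k => (hchain k).1) (fun k => (hchain k).2)
            (hvlim m₀ le_rfl) ?_
          intro k
          rw [← Function.iterate_add_apply, Nat.add_comm d m₀,
            Function.iterate_add_apply, hstep k]
      · rw [Set.mem_singleton_iff] at hb1
        exact contra hlam0 hSsub hmap hpiece hnolps hd (Or.inr hb1) hb1.le
          (fun k => (hsD k).1) (fun k => (hsD k).2) (fun k => (hsIoo k).2)
          hfreek hslimb hstep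
    · -- interior case
      have hyD := piece_mem' hQfin hS0 hqQ ⟨hyq, hyb⟩
      have hHB : ∀ i j, dist (f^[i] (s j)) (f^[i] ystar) ≤ lam^i * dist (s j) ystar := by
        intro i j
        have hfree1 : Set.Ioo (min ystar (s j)) (max ystar (s j)) ∩ Qset f S = ∅ := by
          rw [Set.eq_empty_iff_forall_notMem]
          rintro t ⟨ht1, ht2⟩
          apply (Set.eq_empty_iff_forall_notMem.1 hbfree t)
          refine ⟨⟨?_, ?_⟩, ht2⟩
          · exact lt_of_le_of_lt (le_min hyq.le (hsIoo j).1.le) ht1.1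
          · exact lt_of_lt_of_le ht1.2 (max_le hyb.le (hsIoo j).2.le)
        have := (spk hlam0 hSsub hmap hpiece hyD.1 (hsD j).1 hyD.2.1 (hsD j).2
          hfree1 i).1
        rw [Real.dist_eq, Real.dist_eq]
        exact this
      obtain ⟨hfd, homega⟩ := finish hd hsdef hstep hHB hylim
      exact ⟨ystar, hyD.1, ⟨d, hd, hfd⟩, homega⟩

end Stmt8


/-- A piecewise increasing contraction with no left periodic singular
point and with `Q = ⋃_{n≥0} f^{-n}(S)` finite is asymptotically periodic: every
ω-limit set is a periodic orbit, and there are only finitely many periodic orbits. -/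
theorem stmt_8 (f : ℝ → ℝ) (S : Set ℝ) (lam : ℝ)
    (hlam0 : 0 < lam) (hlam1 : lam < 1)
    (hSfin : S.Finite) (hS0 : (0:ℝ) ∈ S) (hSsub : S ⊆ Set.Ico 0 1)
    (hmap : Set.MapsTo f (Set.Ico 0 1) (Set.Ico 0 1))
    (hrc : ∀ x ∈ Set.Ico (0:ℝ) 1, ContinuousWithinAt f (Set.Ici x) x)
    (hpiece : ∀ x ∈ Set.Ico (0:ℝ) 1, ∀ y ∈ Set.Ico (0:ℝ) 1, x < y →
      (∀ s ∈ S, s ∉ Set.Ioc x y) → f x < f y ∧ f y - f x ≤ lam * (y - x))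
    (hnolps : ∀ x : ℝ, (x ∈ S ∧ x ≠ 0) ∨ x = 1 → ∀ n : ℕ, 1 ≤ n →
      ¬ Filter.Tendsto (f^[n]) (nhdsWithin x (Set.Iio x)) (nhds x))
    (hQfin : {x | x ∈ Set.Ico (0:ℝ) 1 ∧ ∃ n : ℕ, f^[n] x ∈ S}.Finite) :
    (∀ x ∈ Set.Ico (0:ℝ) 1, ∃ y ∈ Set.Ico (0:ℝ) 1,
      (∃ p, 1 ≤ p ∧ f^[p] y = y) ∧ omegaSet f x = Set.range fun n => f^[n] y) ∧
    {O : Set ℝ | ∃ x, x ∈ Set.Ico (0:ℝ) 1 ∧ (∃ p, 1 ≤ p ∧ f^[p] x = x) ∧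
        O = Set.range fun n => f^[n] x}.Finite := by
  have hQfin' : (Stmt8.Qset f S).Finite := hQfin
  constructor
  · exact Stmt8.part1 hlam0 hlam1 hSfin hS0 hSsub hmap hpiece hnolps hQfin'
  · exact Stmt8.part2 hlam0 hlam1 hSsub hS0 hmap hpiece hQfin'
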